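/- Let n ≥ 1, δ ∈ (0, n], α ∈ (0, δ), κ ∈ [0, α), and p ∈ [1, δ/α). Then there is a constant c depending only on n, α, δ, κ, and p such that for all functions f : ℝⁿ → [−∞, ∞] and every x ∈ ℝⁿ, R^δ_α f(x) ≤ c ( M^δ_κ f(x) )^{(δ−pα)/(δ−κp)} ( ∫_{ℝⁿ} |f(y)|^p dH^δ_∞(y) )^{(α−κ)/(δ−κp)} (Hedberg-type pointwise inequality for the Hausdorff content Riesz potential). -/

import Mathlib

open Metric Set ENNReal NNReal MeasureTheory

/-- The δ-dimensional Hausdorff content of a set `E ⊆ ℝⁿ`: the infimum of `∑ rᵢ^δ`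
over all countable covers of `E` by open balls `B(xᵢ, rᵢ)`. -/
noncomputable def hContent (n : ℕ) (δ : ℝ) (E : Set (EuclideanSpace ℝ (Fin n))) : ℝ≥0∞ :=
  ⨅ (c : ℕ → EuclideanSpace ℝ (Fin n)) (r : ℕ → NNReal)
    (_ : E ⊆ ⋃ i, Metric.ball (c i) (r i)), ∑' i, (r i : ℝ≥0∞) ^ δ

/-- The Choquet integral `∫_Ω f dH^δ_∞ = ∫_0^∞ H^δ_∞({x ∈ Ω : f x > t}) dt`. -/
noncomputable def choquet (n : ℕ) (δ : ℝ) (Ω : Set (EuclideanSpace ℝ (Fin n)))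
    (f : EuclideanSpace ℝ (Fin n) → ℝ≥0∞) : ℝ≥0∞ :=
  ∫⁻ t in Set.Ioi (0 : ℝ), hContent n δ {x | x ∈ Ω ∧ ENNReal.ofReal t < f x}

/-- The Hausdorff content centred fractional maximal function `M^δ_κ f`. -/
noncomputable def maxF (n : ℕ) (δ κ : ℝ) (f : EuclideanSpace ℝ (Fin n) → EReal)
    (x : EuclideanSpace ℝ (Fin n)) : ℝ≥0∞ :=
  ⨆ (r : ℝ) (_ : 0 < r),
    (ENNReal.ofReal (r ^ κ) / hContent n δ (Metric.ball x r)) *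
      choquet n δ (Metric.ball x r) (fun y => (f y).abs)

/-- The Hausdorff content Riesz potential `R^δ_α f`. -/
noncomputable def riesz (n : ℕ) (δ α : ℝ) (f : EuclideanSpace ℝ (Fin n) → EReal)
    (x : EuclideanSpace ℝ (Fin n)) : ℝ≥0∞ :=
  choquet n δ Set.univ (fun y => (f y).abs / ENNReal.ofReal (dist x y ^ (δ - α)))

/-! ### Auxiliary lemmas on the Hausdorff content -/

section Aux

variable {n : ℕ} {δ : ℝ}

lemma hContent_mono {E F : Set (EuclideanSpace ℝ (Fin n))} (h : E ⊆ F) :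
    hContent n δ E ≤ hContent n δ F := by
  refine le_iInf fun c => le_iInf fun r => le_iInf fun hc => ?_
  exact iInf_le_of_le c (iInf_le_of_le r (iInf_le_of_le (h.trans hc) le_rfl))

lemma hContent_le_of_subset_ball (hδ : 0 < δ) {E : Set (EuclideanSpace ℝ (Fin n))}
    {c : EuclideanSpace ℝ (Fin n)} {r : ℝ≥0} (h : E ⊆ ball c r) :
    hContent n δ E ≤ (r : ℝ≥0∞) ^ δ := by
  have hsub : E ⊆ ⋃ i : ℕ, ball ((fun _ => c) i) ((fun i => if i = 0 then r else 0) i) := by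
    intro x hx
    exact mem_iUnion.2 ⟨0, by simpa using h hx⟩
  refine le_trans (iInf_le_of_le (fun _ => c)
    (iInf_le_of_le (fun i => if i = 0 then r else 0) (iInf_le_of_le hsub le_rfl))) ?_
  have : ∀ i : ℕ, (((if i = 0 then r else 0 : ℝ≥0)) : ℝ≥0∞) ^ δ
      = if i = 0 then (r : ℝ≥0∞) ^ δ else 0 := by
    intro i; split <;> simp [ENNReal.zero_rpow_of_pos hδ]
  rw [tsum_congr this, tsum_ite_eq]

lemma hContent_ball_le (hδ : 0 < δ) (x : EuclideanSpace ℝ (Fin n)) {r : ℝ} (hr : 0 < r) :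
    hContent n δ (ball x r) ≤ ENNReal.ofReal (r ^ δ) := by
  have hball : ball x r ⊆ ball x (r.toNNReal : ℝ≥0) := by
    rw [Real.coe_toNNReal r hr.le]
  refine (hContent_le_of_subset_ball hδ hball).trans (le_of_eq ?_)
  rw [← ENNReal.ofReal_rpow_of_pos hr]
  rfl

lemma hContent_singleton (hδ : 0 < δ) (x : EuclideanSpace ℝ (Fin n)) :
    hContent n δ {x} = 0 := by
  refine le_antisymm ?_ (zero_le)
  refine ENNReal.le_of_forall_pos_le_add fun ε hε _ => ?_
  have hr : (0:ℝ≥0) < ε ^ (1/δ) := NNReal.rpow_pos hε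
  have hsub : ({x} : Set (EuclideanSpace ℝ (Fin n))) ⊆ ball x (ε ^ (1/δ) : ℝ≥0) := by
    simp only [singleton_subset_iff, mem_ball, dist_self]
    exact_mod_cast hr
  calc hContent n δ {x} ≤ ((ε ^ (1/δ) : ℝ≥0) : ℝ≥0∞) ^ δ := hContent_le_of_subset_ball hδ hsub
    _ = (ε : ℝ≥0∞) := by
        rw [← ENNReal.coe_rpow_of_nonneg _ (by positivity), ← NNReal.rpow_mul,
          one_div, inv_mul_cancel₀ hδ.ne', NNReal.rpow_one]
    _ ≤ 0 + (ε : ℝ≥0∞) := by simp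

lemma hContent_iUnion_nat_le (E : ℕ → Set (EuclideanSpace ℝ (Fin n))) :
    hContent n δ (⋃ i, E i) ≤ ∑' i, hContent n δ (E i) := by
  refine ENNReal.le_of_forall_pos_le_add fun ε hε hlt => ?_
  have hfin : ∀ i, hContent n δ (E i) ≠ ∞ := fun i =>
    (lt_of_le_of_lt (ENNReal.le_tsum i) hlt).ne
  have key : ∀ i : ℕ, ∃ (c : ℕ → EuclideanSpace ℝ (Fin n)) (r : ℕ → ℝ≥0),
      (E i ⊆ ⋃ k, ball (c k) (r k)) ∧
      ∑' k, (r k : ℝ≥0∞) ^ δ ≤ hContent n δ (E i) + (ε : ℝ≥0∞) * 2⁻¹ ^ (i + 1) := by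
    intro i
    have hne : (ε : ℝ≥0∞) * 2⁻¹ ^ (i + 1) ≠ 0 := by
      refine mul_ne_zero (by exact_mod_cast hε.ne') ?_
      exact pow_ne_zero _ (by simp)
    have hlt' : hContent n δ (E i) < hContent n δ (E i) + (ε : ℝ≥0∞) * 2⁻¹ ^ (i + 1) :=
      ENNReal.lt_add_right (hfin i) hne
    conv_lhs at hlt' => rw [hContent]
    obtain ⟨c, hc⟩ := iInf_lt_iff.mp hlt'
    obtain ⟨r, hr⟩ := iInf_lt_iff.mp hc
    obtain ⟨hcov, hs⟩ := iInf_lt_iff.mp hr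
    exact ⟨c, r, hcov, hs.le⟩
  choose c r hcov hsum using key
  set e : ℕ ≃ ℕ × ℕ := (Denumerable.eqv (ℕ × ℕ)).symm with he
  have hsub : (⋃ i, E i) ⊆ ⋃ m : ℕ, ball (c (e m).1 (e m).2) (r (e m).1 (e m).2) := by
    intro x hx
    obtain ⟨i, hi⟩ := mem_iUnion.mp hx
    obtain ⟨k, hk⟩ := mem_iUnion.mp (hcov i hi)
    refine mem_iUnion.2 ⟨e.symm (i, k), ?_⟩
    simpa using hk
  calc hContent n δ (⋃ i, E i)
      ≤ ∑' m : ℕ, ((r (e m).1 (e m).2 : ℝ≥0∞)) ^ δ := by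
        exact iInf_le_of_le _ (iInf_le_of_le _ (iInf_le_of_le hsub le_rfl))
    _ = ∑' q : ℕ × ℕ, ((r q.1 q.2 : ℝ≥0∞)) ^ δ :=
        Equiv.tsum_eq e (fun q : ℕ × ℕ => ((r q.1 q.2 : ℝ≥0∞)) ^ δ)
    _ = ∑' i, ∑' k, ((r i k : ℝ≥0∞)) ^ δ :=
        ENNReal.tsum_prod (f := fun i k => ((r i k : ℝ≥0∞)) ^ δ)
    _ ≤ ∑' i, (hContent n δ (E i) + (ε : ℝ≥0∞) * 2⁻¹ ^ (i + 1)) := Summable.tsum_le_tsum hsum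
        (ENNReal.summable) (ENNReal.summable)
    _ = (∑' i, hContent n δ (E i)) + (ε : ℝ≥0∞) * ∑' i : ℕ, (2⁻¹ : ℝ≥0∞) ^ (i + 1) := by
        rw [ENNReal.tsum_add, ENNReal.tsum_mul_left]
    _ ≤ (∑' i, hContent n δ (E i)) + ε := by
        gcongr
        have : ∑' i : ℕ, (2⁻¹ : ℝ≥0∞) ^ (i + 1) = 2⁻¹ * ∑' i : ℕ, (2⁻¹ : ℝ≥0∞) ^ i := by
          rw [← ENNReal.tsum_mul_left]
          exact tsum_congr fun i => by rw [pow_succ, mul_comm]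
        rw [this, ENNReal.tsum_geometric]
        simp [ENNReal.one_sub_inv_two]
        norm_num [ENNReal.inv_mul_cancel]

/-- Countable subadditivity of the Hausdorff content. -/
lemma hContent_iUnion_le (hδ : 0 < δ) {ι : Type*} [Countable ι]
    (E : ι → Set (EuclideanSpace ℝ (Fin n))) :
    hContent n δ (⋃ i, E i) ≤ ∑' i, hContent n δ (E i) := by
  obtain ⟨f, hf⟩ := Countable.exists_injective_nat ι
  have hempty : hContent n δ (∅ : Set (EuclideanSpace ℝ (Fin n))) = 0 := by
    refine le_antisymm ?_ (zero_le)
    have := hContent_le_of_subset_ball hδ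
      (E := (∅ : Set (EuclideanSpace ℝ (Fin n)))) (c := Classical.arbitrary _) (r := 0)
      (by simp)
    simpa [ENNReal.zero_rpow_of_pos hδ] using this
  classical
  set E' : ℕ → Set (EuclideanSpace ℝ (Fin n)) :=
    fun m => ⋃ (i : ι) (_ : f i = m), E i with hE'
  have hcov : (⋃ i, E i) ⊆ ⋃ m, E' m := by
    intro y hy
    obtain ⟨i, hi⟩ := mem_iUnion.mp hy
    exact mem_iUnion.2 ⟨f i, mem_iUnion.2 ⟨i, mem_iUnion.2 ⟨rfl, hi⟩⟩⟩
  have hE'f : ∀ i : ι, E' (f i) = E i := by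
    intro i
    apply le_antisymm
    · refine iUnion_subset fun i' => iUnion_subset fun hi' => ?_
      rw [hf hi']
    · exact subset_iUnion₂ (s := fun i' (_ : f i' = f i) => E i') i rfl
  have hsupp : Function.support (fun m => hContent n δ (E' m)) ⊆ Set.range f := by
    intro m hm
    by_contra hc
    have : E' m = ∅ := by
      refine eq_empty_iff_forall_notMem.2 fun y hy => ?_
      obtain ⟨i, hi⟩ := mem_iUnion.mp hy
      obtain ⟨hfi, _⟩ := mem_iUnion.mp hi
      exact hc ⟨i, hfi⟩
    refine hm ?_
    show hContent n δ (E' m) = 0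
    rw [this, hempty]
  calc hContent n δ (⋃ i, E i) ≤ hContent n δ (⋃ m, E' m) := hContent_mono hcov
    _ ≤ ∑' m, hContent n δ (E' m) := hContent_iUnion_nat_le E'
    _ = ∑' i, hContent n δ (E' (f i)) := (hf.tsum_eq hsupp).symm
    _ = ∑' i, hContent n δ (E i) := tsum_congr fun i => by rw [hE'f i]

lemma antitone_hContent_superlevel (Ω : Set (EuclideanSpace ℝ (Fin n)))
    (g : EuclideanSpace ℝ (Fin n) → ℝ≥0∞) :
    Antitone (fun s : ℝ => hContent n δ {x | x ∈ Ω ∧ ENNReal.ofReal s < g x}) := by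
  intro s s' hss'
  exact hContent_mono fun y hy => ⟨hy.1, lt_of_le_of_lt (ENNReal.ofReal_le_ofReal hss') hy.2⟩

/-- Chebyshev's inequality for the Choquet integral. -/
lemma mul_hContent_le_choquet (Ω : Set (EuclideanSpace ℝ (Fin n)))
    (g : EuclideanSpace ℝ (Fin n) → ℝ≥0∞) {s : ℝ} (hs : 0 < s) :
    ENNReal.ofReal s * hContent n δ {x | x ∈ Ω ∧ ENNReal.ofReal s < g x} ≤
      choquet n δ Ω g := by
  set A := {x | x ∈ Ω ∧ ENNReal.ofReal s < g x} with hA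
  calc ENNReal.ofReal s * hContent n δ A
      = ∫⁻ _ in Ioo (0:ℝ) s, hContent n δ A := by
        rw [setLIntegral_const, Real.volume_Ioo, sub_zero, mul_comm]
    _ ≤ ∫⁻ t in Ioo (0:ℝ) s, hContent n δ {x | x ∈ Ω ∧ ENNReal.ofReal t < g x} := by
        refine lintegral_mono_ae ((ae_restrict_iff' measurableSet_Ioo).2 (ae_of_all _ ?_))
        intro t ht
        exact hContent_mono fun y hy =>
          ⟨hy.1, lt_of_le_of_lt (ENNReal.ofReal_le_ofReal ht.2.le) hy.2⟩
    _ ≤ choquet n δ Ω g := lintegral_mono_set Ioo_subset_Ioi_self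

/-- Chebyshev's inequality at exponent `q`. -/
lemma hContent_le_div (Ω : Set (EuclideanSpace ℝ (Fin n)))
    (g : EuclideanSpace ℝ (Fin n) → ℝ≥0∞) {s q : ℝ} (hs : 0 < s) (hq : 0 < q) :
    hContent n δ {x | x ∈ Ω ∧ ENNReal.ofReal s < g x}
      ≤ choquet n δ univ (fun y => g y ^ q) * (ENNReal.ofReal (s ^ q))⁻¹ := by
  have hsq : (0:ℝ) < s ^ q := Real.rpow_pos_of_pos hs q
  have hsub : {x | x ∈ Ω ∧ ENNReal.ofReal s < g x}
      ⊆ {x | x ∈ (univ : Set (EuclideanSpace ℝ (Fin n))) ∧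
          ENNReal.ofReal (s ^ q) < g x ^ q} := by
    intro y hy
    refine ⟨mem_univ y, ?_⟩
    rw [← ENNReal.ofReal_rpow_of_pos hs]
    exact ENNReal.rpow_lt_rpow hy.2 hq
  refine (hContent_mono hsub).trans ?_
  have hcheb := mul_hContent_le_choquet (n := n) (δ := δ) univ (fun y => g y ^ q) hsq
  rw [mul_comm] at hcheb
  rw [← div_eq_mul_inv]
  exact (ENNReal.le_div_iff_mul_le (Or.inl (ENNReal.ofReal_pos.2 hsq).ne')
    (Or.inl ENNReal.ofReal_ne_top)).2 hcheb

/-- The maximal function bound on local Choquet integrals. -/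
lemma choquet_ball_le (hδ : 0 < δ) {κ : ℝ}
    (f : EuclideanSpace ℝ (Fin n) → EReal) (x : EuclideanSpace ℝ (Fin n))
    {r : ℝ} (hr : 0 < r) (hM : maxF n δ κ f x ≠ ∞) :
    choquet n δ (ball x r) (fun y => (f y).abs)
      ≤ maxF n δ κ f x * ENNReal.ofReal (r ^ (δ - κ)) := by
  set C := choquet n δ (ball x r) (fun y => (f y).abs) with hC
  set h := hContent n δ (ball x r) with hh
  set a := ENNReal.ofReal (r ^ κ) with ha
  have ha0 : a ≠ 0 := by
    simp only [ha, Ne, ENNReal.ofReal_eq_zero, not_le]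
    exact Real.rpow_pos_of_pos hr κ
  have hat : a ≠ ∞ := ENNReal.ofReal_ne_top
  have hle : a / h * C ≤ maxF n δ κ f x := by
    rw [maxF]
    exact le_iSup₂ (f := fun (r' : ℝ) (_ : 0 < r') =>
      (ENNReal.ofReal (r' ^ κ) / hContent n δ (ball x r')) *
        choquet n δ (ball x r') (fun y => (f y).abs)) r hr
  have hft : h ≠ ∞ :=
    ((hContent_ball_le hδ x hr).trans_lt ENNReal.ofReal_lt_top).ne
  by_cases h0 : h = 0
  · have : a / h = ∞ := by rw [h0, ENNReal.div_zero ha0]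
    rw [this] at hle
    have hC0 : C = 0 := by
      by_contra hc
      rw [ENNReal.top_mul hc] at hle
      exact hM (top_le_iff.1 hle)
    rw [hC0]
    exact zero_le
  · have h1 : a * C ≤ maxF n δ κ f x * h := by
      have := mul_le_mul_left hle h
      rwa [mul_right_comm, ENNReal.div_mul_cancel h0 hft] at this
    have h2 : C ≤ maxF n δ κ f x * h / a :=
      (ENNReal.le_div_iff_mul_le (Or.inl ha0) (Or.inl hat)).2 (by rwa [mul_comm C a])
    refine h2.trans ?_
    rw [mul_div_assoc]
    refine mul_le_mul_right ?_ _
    calc h / a ≤ ENNReal.ofReal (r ^ δ) / ENNReal.ofReal (r ^ κ) :=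
          ENNReal.div_le_div_right (hContent_ball_le hδ x hr) _
      _ = ENNReal.ofReal (r ^ δ / r ^ κ) :=
          (ENNReal.ofReal_div_of_pos (Real.rpow_pos_of_pos hr κ)).symm
      _ = ENNReal.ofReal (r ^ (δ - κ)) := by rw [← Real.rpow_sub hr]

end Aux

/-! ### Auxiliary lemmas: integrals and sums -/

lemma lintegral_Ioi_comp_const_mul {F : ℝ → ℝ≥0∞} (hF : Measurable F) {a : ℝ} (ha : 0 < a) :
    ∫⁻ t in Ioi (0:ℝ), F (a * t) = ENNReal.ofReal a⁻¹ * ∫⁻ s in Ioi (0:ℝ), F s := by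
  have hG : Measurable ((Ioi (0:ℝ)).indicator F) := hF.indicator measurableSet_Ioi
  have key : ∀ t : ℝ, (Ioi (0:ℝ)).indicator (fun t => F (a * t)) t
      = (Ioi (0:ℝ)).indicator F (a * t) := by
    intro t
    by_cases ht : t ∈ Ioi (0:ℝ)
    · rw [indicator_of_mem ht, indicator_of_mem (by exact mul_pos ha ht)]
    · rw [indicator_of_notMem ht, indicator_of_notMem]
      simp only [mem_Ioi, not_lt] at ht ⊢
      exact mul_nonpos_of_nonneg_of_nonpos ha.le ht
  calc ∫⁻ t in Ioi (0:ℝ), F (a * t)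
      = ∫⁻ t, (Ioi (0:ℝ)).indicator F (a * t) := by
        rw [← lintegral_indicator measurableSet_Ioi]
        exact lintegral_congr key
    _ = ∫⁻ s, (Ioi (0:ℝ)).indicator F s ∂(Measure.map (a * ·) volume) :=
        (lintegral_map hG (measurable_const_mul a)).symm
    _ = ENNReal.ofReal a⁻¹ * ∫⁻ s in Ioi (0:ℝ), F s := by
        rw [Real.map_volume_mul_left ha.ne', lintegral_smul_measure,
          abs_of_pos (inv_pos.2 ha), lintegral_indicator measurableSet_Ioi, smul_eq_mul]

lemma kernel_alg {a i p : ℝ} (ha : 0 < a) (hi : 0 < i) (hp : 1 < p) :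
    a * ((i/a) ^ (1/p)) + i * (((i/a) ^ (1/p)) ^ (1-p) / (p-1))
      = p/(p-1) * (i^(1/p) * a^(1-1/p)) := by
  have hp0 : (0:ℝ) < p := lt_trans one_pos hp
  have hia : (0:ℝ) < i / a := div_pos hi ha
  have hdiv : (i/a) ^ (1/p) = i^(1/p) * a^(-(1/p)) := by
    rw [Real.div_rpow hi.le ha.le, Real.rpow_neg ha.le, div_eq_mul_inv]
  have c1 : a * ((i/a) ^ (1/p)) = i^(1/p) * a^(1-1/p) := by
    rw [hdiv, show (1 - 1/p : ℝ) = 1 + (-(1/p)) by ring, Real.rpow_add ha, Real.rpow_one]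
    ring
  have c2 : i * (((i/a) ^ (1/p)) ^ (1-p)) = i^(1/p) * a^(1-1/p) := by
    rw [← Real.rpow_mul hia.le, Real.div_rpow hi.le ha.le, div_eq_mul_inv,
      ← Real.rpow_neg ha.le]
    have e1 : i * (i ^ (1/p * (1-p)) * a ^ (-(1/p * (1-p))))
        = (i ^ (1:ℝ) * i ^ (1/p * (1-p))) * a ^ (-(1/p * (1-p))) := by
      rw [Real.rpow_one]; ring
    rw [e1, ← Real.rpow_add hi]
    have e2 : (1 : ℝ) + 1/p * (1-p) = 1/p := by field_simp; ring
    have e3 : (-(1/p * (1-p)) : ℝ) = 1 - 1/p := by field_simp; ring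
    rw [e2, e3]
  have hne : p - 1 ≠ 0 := by linarith
  field_simp
  rw [show a * ((i/a) ^ (1/p)) * (p-1) = (a * ((i/a) ^ (1/p))) * (p-1) by ring]
  rw [c1]
  calc i ^ (1/p) * a ^ (1 - 1/p) * (p - 1) + i * ((i/a) ^ (1/p)) ^ (1-p)
      = i ^ (1/p) * a ^ (1 - 1/p) * (p - 1) + i ^ (1/p) * a ^ (1-1/p) := by rw [c2]
    _ = p * (i ^ (1/p) * a ^ (1 - 1/p)) := by ring
    _ = p * (i ^ (1/p) * a ^ ((p-1)/p)) := by
        rw [show ((p-1)/p : ℝ) = 1 - 1/p by field_simp]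
  ring

lemma lintegral_min_kernel {a i p : ℝ} (ha : 0 < a) (hi : 0 < i) (hp : 1 < p) :
    ∫⁻ s in Ioi (0:ℝ), min (ENNReal.ofReal a) (ENNReal.ofReal i * (ENNReal.ofReal (s ^ p))⁻¹)
      ≤ ENNReal.ofReal (p/(p-1) * (i^(1/p) * a^(1-1/p))) := by
  set s₀ : ℝ := (i/a) ^ (1/p) with hs₀def
  have hs₀ : 0 < s₀ := Real.rpow_pos_of_pos (div_pos hi ha) _
  have hsplit : Ioi (0:ℝ) ⊆ Ioc 0 s₀ ∪ Ioi s₀ := by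
    intro t ht
    rcases le_or_gt t s₀ with h | h
    · exact Or.inl ⟨ht, h⟩
    · exact Or.inr h
  have h1 : (∫⁻ s in Ioc (0:ℝ) s₀,
      min (ENNReal.ofReal a) (ENNReal.ofReal i * (ENNReal.ofReal (s ^ p))⁻¹))
      ≤ ENNReal.ofReal (a * s₀) := by
    calc (∫⁻ s in Ioc (0:ℝ) s₀,
        min (ENNReal.ofReal a) (ENNReal.ofReal i * (ENNReal.ofReal (s ^ p))⁻¹))
        ≤ ∫⁻ _ in Ioc (0:ℝ) s₀, ENNReal.ofReal a := lintegral_mono fun s => min_le_left _ _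
      _ = ENNReal.ofReal (a * s₀) := by
        rw [setLIntegral_const, Real.volume_Ioc, sub_zero, ← ENNReal.ofReal_mul ha.le]
  have hint : IntegrableOn (fun s : ℝ => s ^ (-p)) (Ioi s₀) :=
    integrableOn_Ioi_rpow_of_lt (by linarith) hs₀
  have hnn : (0 : ℝ → ℝ) ≤ᵐ[volume.restrict (Ioi s₀)] fun s : ℝ => s ^ (-p) :=
    (ae_restrict_iff' measurableSet_Ioi).2 (ae_of_all _ fun s hs =>
      Real.rpow_nonneg (le_of_lt (hs₀.trans hs)) _)
  have h2 : (∫⁻ s in Ioi s₀,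
      min (ENNReal.ofReal a) (ENNReal.ofReal i * (ENNReal.ofReal (s ^ p))⁻¹))
      ≤ ENNReal.ofReal (i * (s₀ ^ (1-p) / (p-1))) := by
    have hptw : ∀ s ∈ Ioi s₀,
        min (ENNReal.ofReal a) (ENNReal.ofReal i * (ENNReal.ofReal (s ^ p))⁻¹)
          ≤ ENNReal.ofReal i * ENNReal.ofReal (s ^ (-p)) := by
      intro s hs
      have hs0 : (0:ℝ) < s := hs₀.trans hs
      refine (min_le_right _ _).trans (le_of_eq ?_)
      rw [← ENNReal.ofReal_inv_of_pos (Real.rpow_pos_of_pos hs0 p), ← Real.rpow_neg hs0.le]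
    calc (∫⁻ s in Ioi s₀,
        min (ENNReal.ofReal a) (ENNReal.ofReal i * (ENNReal.ofReal (s ^ p))⁻¹))
        ≤ ∫⁻ s in Ioi s₀, ENNReal.ofReal i * ENNReal.ofReal (s ^ (-p)) :=
          lintegral_mono_ae ((ae_restrict_iff' measurableSet_Ioi).2 (ae_of_all _ hptw))
      _ = ENNReal.ofReal i * ∫⁻ s in Ioi s₀, ENNReal.ofReal (s ^ (-p)) :=
          lintegral_const_mul' _ _ ENNReal.ofReal_ne_top
      _ = ENNReal.ofReal i * ENNReal.ofReal (∫ s in Ioi s₀, s ^ (-p)) := by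
          rw [MeasureTheory.ofReal_integral_eq_lintegral_ofReal hint hnn]
      _ = ENNReal.ofReal (i * (s₀ ^ (1-p) / (p-1))) := by
          rw [integral_Ioi_rpow_of_lt (by linarith) hs₀, ← ENNReal.ofReal_mul hi.le]
          congr 2
          rw [show (-p + 1 : ℝ) = 1 - p by ring]
          rw [show (1 - p : ℝ) = -(p-1) by ring, neg_div_neg_eq]
  calc (∫⁻ s in Ioi (0:ℝ),
      min (ENNReal.ofReal a) (ENNReal.ofReal i * (ENNReal.ofReal (s ^ p))⁻¹))
      ≤ ∫⁻ s in Ioc (0:ℝ) s₀ ∪ Ioi s₀,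
        min (ENNReal.ofReal a) (ENNReal.ofReal i * (ENNReal.ofReal (s ^ p))⁻¹) :=
        lintegral_mono_set hsplit
    _ ≤ (∫⁻ s in Ioc (0:ℝ) s₀,
        min (ENNReal.ofReal a) (ENNReal.ofReal i * (ENNReal.ofReal (s ^ p))⁻¹))
        + ∫⁻ s in Ioi s₀,
        min (ENNReal.ofReal a) (ENNReal.ofReal i * (ENNReal.ofReal (s ^ p))⁻¹) :=
        lintegral_union_le _ _ _
    _ ≤ ENNReal.ofReal (a * s₀) + ENNReal.ofReal (i * (s₀ ^ (1-p) / (p-1))) := add_le_add h1 h2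
    _ = ENNReal.ofReal (a * s₀ + i * (s₀ ^ (1-p) / (p-1))) :=
        (ENNReal.ofReal_add (by positivity)
          (mul_nonneg hi.le (div_nonneg (Real.rpow_nonneg hs₀.le _) (by linarith)))).symm
    _ = ENNReal.ofReal (p/(p-1) * (i^(1/p) * a^(1-1/p))) := by rw [kernel_alg ha hi hp]

lemma two_rpow_ne_zero {y : ℝ} : (2:ℝ≥0∞) ^ y ≠ 0 := by
  simp [ENNReal.rpow_eq_zero_iff]

lemma two_rpow_ne_top {y : ℝ} : (2:ℝ≥0∞) ^ y ≠ ∞ := by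
  simp [ENNReal.rpow_eq_top_iff]

lemma two_rpow_add (y z : ℝ) : (2:ℝ≥0∞) ^ (y + z) = 2 ^ y * 2 ^ z :=
  ENNReal.rpow_add y z (by norm_num) (by norm_num)

lemma geom_inv_ne_top {y : ℝ} (hy : y < 0) : (1 - (2:ℝ≥0∞) ^ y)⁻¹ ≠ ∞ := by
  rw [Ne, ENNReal.inv_eq_top, tsub_eq_zero_iff_le]
  exact not_le.2 (ENNReal.rpow_lt_one_of_one_lt_of_neg (by norm_num) hy)

lemma tsum_int_left (J : ℤ) (β : ℝ) :
    ∑' j : ℤ, (if j ≤ J then (2:ℝ≥0∞) ^ ((j:ℝ) * β) else 0)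
      = (2:ℝ≥0∞) ^ ((J:ℝ) * β) * (1 - (2:ℝ≥0∞) ^ (-β))⁻¹ := by
  set f : ℤ → ℝ≥0∞ := fun j => if j ≤ J then (2:ℝ≥0∞) ^ ((j:ℝ) * β) else 0 with hf
  have hinj : Function.Injective (fun k : ℕ => J - (k:ℤ)) := by
    intro a b h
    simp only at h
    omega
  have hsupp : Function.support f ⊆ Set.range (fun k : ℕ => J - (k:ℤ)) := by
    intro j hj
    have hjJ : j ≤ J := by
      by_contra hc
      exact hj (if_neg hc)
    exact ⟨(J - j).toNat, by simp [Int.toNat_of_nonneg (by omega : (0:ℤ) ≤ J - j)]⟩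
  rw [← hinj.tsum_eq hsupp]
  have hterm : ∀ k : ℕ, f (J - (k:ℤ))
      = (2:ℝ≥0∞) ^ ((J:ℝ) * β) * ((2:ℝ≥0∞) ^ (-β)) ^ k := by
    intro k
    have h1 : f (J - (k:ℤ)) = (2:ℝ≥0∞) ^ ((((J - (k:ℤ)):ℤ):ℝ) * β) := if_pos (by omega)
    rw [h1]
    have h2 : ((((J - (k:ℤ)):ℤ):ℝ)) * β = (J:ℝ) * β + (-β) * (k:ℕ) := by push_cast; ring
    rw [h2, two_rpow_add]
    congr 1
    rw [ENNReal.rpow_mul, ENNReal.rpow_natCast]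
  rw [tsum_congr hterm, ENNReal.tsum_mul_left, ENNReal.tsum_geometric]

lemma tsum_int_right (J : ℤ) (γ : ℝ) :
    ∑' j : ℤ, (if j ≤ J then 0 else (2:ℝ≥0∞) ^ ((j:ℝ) * γ))
      = (2:ℝ≥0∞) ^ (((J:ℝ) + 1) * γ) * (1 - (2:ℝ≥0∞) ^ γ)⁻¹ := by
  set f : ℤ → ℝ≥0∞ := fun j => if j ≤ J then 0 else (2:ℝ≥0∞) ^ ((j:ℝ) * γ) with hf
  have hinj : Function.Injective (fun k : ℕ => J + 1 + (k:ℤ)) := by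
    intro a b h
    simp only at h
    omega
  have hsupp : Function.support f ⊆ Set.range (fun k : ℕ => J + 1 + (k:ℤ)) := by
    intro j hj
    have hjJ : ¬ (j ≤ J) := by
      by_contra hc
      exact hj (if_pos hc)
    exact ⟨(j - J - 1).toNat, by simp [Int.toNat_of_nonneg (by omega : (0:ℤ) ≤ j - J - 1)]; omega⟩
  rw [← hinj.tsum_eq hsupp]
  have hterm : ∀ k : ℕ, f (J + 1 + (k:ℤ))
      = (2:ℝ≥0∞) ^ (((J:ℝ) + 1) * γ) * ((2:ℝ≥0∞) ^ γ) ^ k := by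
    intro k
    have h1 : f (J + 1 + (k:ℤ)) = (2:ℝ≥0∞) ^ ((((J + 1 + (k:ℤ)):ℤ):ℝ) * γ) := if_neg (by omega)
    rw [h1]
    have h2 : ((((J + 1 + (k:ℤ)):ℤ):ℝ)) * γ = ((J:ℝ) + 1) * γ + γ * (k:ℕ) := by push_cast; ring
    rw [h2, two_rpow_add]
    congr 1
    rw [ENNReal.rpow_mul, ENNReal.rpow_natCast]
  rw [tsum_congr hterm, ENNReal.tsum_mul_left, ENNReal.tsum_geometric]

/-- Hedberg-type pointwise inequality for the Hausdorff content Riesz potential: for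
`δ ∈ (0, n]`, `α ∈ (0, δ)`, `κ ∈ [0, α)` and `p ∈ [1, δ/α)` there is a constant
`c = c(n, α, δ, κ, p)` such that for every function `f : ℝⁿ → [-∞, ∞]` and every `x`,
`R^δ_α f(x) ≤ c (M^δ_κ f(x))^{(δ-pα)/(δ-κp)} (∫ |f|^p dH^δ_∞)^{(α-κ)/(δ-κp)}`. -/
theorem riesz_hedberg (n : ℕ) (hn : 1 ≤ n) (δ α κ p : ℝ) (hδ0 : 0 < δ) (hδn : δ ≤ n)
    (hα0 : 0 < α) (hαδ : α < δ) (hκ0 : 0 ≤ κ) (hκα : κ < α) (hp1 : 1 ≤ p)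
    (hp2 : p < δ / α) :
    ∃ c : ℝ≥0∞, c ≠ ∞ ∧ ∀ (f : EuclideanSpace ℝ (Fin n) → EReal)
      (x : EuclideanSpace ℝ (Fin n)),
      riesz n δ α f x ≤
        c * (maxF n δ κ f x) ^ ((δ - p * α) / (δ - κ * p)) *
          (choquet n δ Set.univ (fun y => (f y).abs ^ p)) ^ ((α - κ) / (δ - κ * p)) := by
  -- basic positivity facts about the parameters
  have hp0 : (0:ℝ) < p := lt_of_lt_of_le one_pos hp1
  have hpα : p * α < δ := by
    have := (lt_div_iff₀ hα0).mp hp2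
    linarith
  have hκp : κ * p < δ := by nlinarith
  have hden : (0:ℝ) < δ - κ * p := by linarith
  have hθpos : 0 < (δ - p * α) / (δ - κ * p) := div_pos (by linarith) hden
  have hθ₂pos : 0 < (α - κ) / (δ - κ * p) := div_pos (by linarith) hden
  have hαδp : α - δ / p < 0 := by
    rw [sub_neg, lt_div_iff₀ hp0]
    linarith
  set W : ℝ → ℝ≥0∞ := fun y => (2:ℝ≥0∞) ^ y with hWdef
  set θ := (δ - p * α) / (δ - κ * p) with hθdef
  set θ₂ := (α - κ) / (δ - κ * p) with hθ₂def
  set c₁ : ℝ≥0∞ := W (δ - κ) * (1 - W (κ - α))⁻¹ * W (α - κ) with hc₁def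
  set c₂ : ℝ≥0∞ := (ENNReal.ofReal (p/(p-1)) + 1) * W (δ*(1-1/p)) * (1 - W (α - δ/p))⁻¹
    with hc₂def
  have hc₁top : c₁ ≠ ∞ :=
    ENNReal.mul_ne_top (ENNReal.mul_ne_top two_rpow_ne_top
      (geom_inv_ne_top (by linarith))) two_rpow_ne_top
  have hc₂top : c₂ ≠ ∞ :=
    ENNReal.mul_ne_top (ENNReal.mul_ne_top
      (ENNReal.add_ne_top.2 ⟨ENNReal.ofReal_ne_top, ENNReal.one_ne_top⟩) two_rpow_ne_top)
      (geom_inv_ne_top hαδp)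
  have hc₂0 : c₂ ≠ 0 := by
    refine mul_ne_zero (mul_ne_zero ?_ two_rpow_ne_zero) ?_
    · intro h
      rw [add_eq_zero] at h
      exact (one_ne_zero (α := ℝ≥0∞)) h.2
    · refine ENNReal.inv_ne_zero.2 ?_
      exact ((tsub_le_self).trans_lt ENNReal.one_lt_top).ne
  have hcne0 : c₁ + c₂ ≠ 0 := by
    intro h
    rw [add_eq_zero] at h
    exact hc₂0 h.2
  refine ⟨c₁ + c₂, ENNReal.add_ne_top.2 ⟨hc₁top, hc₂top⟩, ?_⟩
  intro f x
  set g : EuclideanSpace ℝ (Fin n) → ℝ≥0∞ := fun y => (f y).abs with hgdef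
  set M := maxF n δ κ f x with hMdef
  set I := choquet n δ univ (fun y => g y ^ p) with hIdef
  -- the dyadic balls and superlevel sets
  set B : ℤ → Set (EuclideanSpace ℝ (Fin n)) :=
    fun j => ball x ((2:ℝ) ^ ((j:ℝ) + 1)) with hBdef
  set cj : ℤ → ℝ := fun j => (2:ℝ) ^ ((j:ℝ) * (δ - α)) with hcjdef
  have hcjpos : ∀ j : ℤ, 0 < cj j := fun j => Real.rpow_pos_of_pos two_pos _
  set A : ℤ → ℝ → Set (EuclideanSpace ℝ (Fin n)) :=
    fun j t => {y | y ∈ B j ∧ ENNReal.ofReal (cj j * t) < g y} with hAdef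
  -- Step 1 : covering of superlevel sets of the Riesz kernel
  have hcover : ∀ t : ℝ, 0 < t →
      {y | y ∈ (univ : Set (EuclideanSpace ℝ (Fin n))) ∧
        ENNReal.ofReal t < g y / ENNReal.ofReal (dist x y ^ (δ - α))}
        ⊆ {x} ∪ ⋃ j : ℤ, A j t := by
    intro t ht y hy
    simp only [mem_setOf_eq, mem_univ, true_and] at hy
    by_cases hyx : y = x
    · exact Or.inl (by simp [hyx])
    right
    have hd : 0 < dist x y := dist_pos.2 (Ne.symm hyx)
    set d := dist x y with hddef
    set j : ℤ := ⌊Real.logb 2 d⌋ with hjdef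
    have h2jd : (2:ℝ) ^ ((j:ℝ)) ≤ d := by
      calc (2:ℝ) ^ ((j:ℝ)) ≤ (2:ℝ) ^ (Real.logb 2 d) :=
            Real.rpow_le_rpow_of_exponent_le one_le_two (Int.floor_le _)
        _ = d := Real.rpow_logb two_pos (by norm_num) hd
    have hd2j : d < (2:ℝ) ^ ((j:ℝ) + 1) := by
      calc d = (2:ℝ) ^ (Real.logb 2 d) := (Real.rpow_logb two_pos (by norm_num) hd).symm
        _ < (2:ℝ) ^ ((j:ℝ) + 1) :=
            Real.rpow_lt_rpow_of_exponent_lt one_lt_two (Int.lt_floor_add_one _)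
    refine mem_iUnion.2 ⟨j, ?_, ?_⟩
    · rw [hBdef]
      simp only [mem_ball]
      rw [dist_comm]
      exact hd2j
    · have hb0 : ENNReal.ofReal (d ^ (δ - α)) ≠ 0 :=
        (ENNReal.ofReal_pos.2 (Real.rpow_pos_of_pos hd _)).ne'
      have hmul : ENNReal.ofReal t * ENNReal.ofReal (d ^ (δ - α)) < g y :=
        (ENNReal.lt_div_iff_mul_lt (Or.inl hb0) (Or.inl ENNReal.ofReal_ne_top)).1 hy
      refine lt_of_le_of_lt ?_ hmul
      rw [← ENNReal.ofReal_mul ht.le]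
      apply ENNReal.ofReal_le_ofReal
      rw [mul_comm (cj j) t]
      apply mul_le_mul_of_nonneg_left _ ht.le
      calc cj j = ((2:ℝ) ^ ((j:ℝ))) ^ (δ - α) := by
            rw [hcjdef, ← Real.rpow_mul (by norm_num : (0:ℝ) ≤ 2)]
        _ ≤ d ^ (δ - α) :=
            Real.rpow_le_rpow (Real.rpow_nonneg (by norm_num) _) h2jd (by linarith)
  -- Step 2 : pointwise subadditivity bound
  have hstep2 : ∀ t : ℝ, 0 < t →
      hContent n δ {y | y ∈ (univ : Set (EuclideanSpace ℝ (Fin n))) ∧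
        ENNReal.ofReal t < g y / ENNReal.ofReal (dist x y ^ (δ - α))}
        ≤ ∑' j : ℤ, hContent n δ (A j t) := by
    intro t ht
    set G : Option ℤ → Set (EuclideanSpace ℝ (Fin n)) :=
      fun o => Option.elim o ({x} : Set (EuclideanSpace ℝ (Fin n))) (fun j => A j t) with hGdef
    have hEq : ⋃ o : Option ℤ, G o = {x} ∪ ⋃ j : ℤ, A j t := iUnion_option _
    refine le_trans (hContent_mono ((hcover t ht).trans hEq.symm.subset)) ?_
    refine le_trans (hContent_iUnion_le hδ0 G) (le_of_eq ?_)
    have hsupp : Function.support (fun o : Option ℤ => hContent n δ (G o))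
        ⊆ Set.range (Option.some : ℤ → Option ℤ) := by
      rintro (_ | j) ho
      · refine absurd ?_ ho
        show hContent n δ (G none) = 0
        simpa [hGdef] using hContent_singleton hδ0 x
      · exact ⟨j, rfl⟩
    exact ((Option.some_injective ℤ).tsum_eq hsupp).symm
  -- Step 3 : the Riesz potential is bounded by the sum of dyadic pieces
  have hmeasF : ∀ j : ℤ, Measurable
      (fun s : ℝ => hContent n δ {y | y ∈ B j ∧ ENNReal.ofReal s < g y}) :=
    fun j => (antitone_hContent_superlevel (B j) g).measurable
  have main1 : riesz n δ α f x
      ≤ ∑' j : ℤ, ENNReal.ofReal (cj j)⁻¹ * choquet n δ (B j) g := by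
    have hr : riesz n δ α f x = ∫⁻ t in Ioi (0:ℝ), hContent n δ
        {y | y ∈ (univ : Set (EuclideanSpace ℝ (Fin n))) ∧
          ENNReal.ofReal t < g y / ENNReal.ofReal (dist x y ^ (δ - α))} := rfl
    rw [hr]
    calc (∫⁻ t in Ioi (0:ℝ), hContent n δ
        {y | y ∈ (univ : Set (EuclideanSpace ℝ (Fin n))) ∧
          ENNReal.ofReal t < g y / ENNReal.ofReal (dist x y ^ (δ - α))})
        ≤ ∫⁻ t in Ioi (0:ℝ), ∑' j : ℤ, hContent n δ (A j t) :=
          lintegral_mono_ae ((ae_restrict_iff' measurableSet_Ioi).2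
            (ae_of_all _ fun t ht => hstep2 t ht))
      _ = ∑' j : ℤ, ∫⁻ t in Ioi (0:ℝ), hContent n δ (A j t) :=
          lintegral_tsum fun j =>
            ((hmeasF j).comp (measurable_const_mul (cj j))).aemeasurable
      _ = ∑' j : ℤ, ENNReal.ofReal (cj j)⁻¹ * choquet n δ (B j) g :=
          tsum_congr fun j => lintegral_Ioi_comp_const_mul (hmeasF j) (hcjpos j)
  -- Degenerate cases
  by_cases hM0 : M = 0
  · have hchz : ∀ j : ℤ, choquet n δ (B j) g = 0 := by
      intro j
      have hrpos : (0:ℝ) < (2:ℝ) ^ ((j:ℝ) + 1) := Real.rpow_pos_of_pos two_pos _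
      have hle : (ENNReal.ofReal (((2:ℝ) ^ ((j:ℝ) + 1)) ^ κ) / hContent n δ (B j)) *
          choquet n δ (B j) g ≤ M := by
        rw [hMdef, maxF]
        exact le_iSup₂ (f := fun (r' : ℝ) (_ : 0 < r') =>
          (ENNReal.ofReal (r' ^ κ) / hContent n δ (ball x r')) *
            choquet n δ (ball x r') (fun y => (f y).abs)) _ hrpos
      rw [hM0] at hle
      have hne : ENNReal.ofReal (((2:ℝ) ^ ((j:ℝ) + 1)) ^ κ) / hContent n δ (B j) ≠ 0 := by
        simp only [Ne, ENNReal.div_eq_zero_iff, not_or]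
        constructor
        · exact (ENNReal.ofReal_pos.2 (Real.rpow_pos_of_pos hrpos κ)).ne'
        · exact ((hContent_ball_le hδ0 x hrpos).trans_lt ENNReal.ofReal_lt_top).ne
      rcases mul_eq_zero.1 (le_antisymm hle (zero_le)) with h | h
      · exact absurd h hne
      · exact h
    refine le_trans (main1.trans (le_of_eq ?_)) (zero_le)
    simp [hchz]
  by_cases hI0 : I = 0
  · have hchz : ∀ j : ℤ, choquet n δ (B j) g = 0 := by
      intro j
      refine le_antisymm ?_ (zero_le)
      have hzero : ∀ s ∈ Ioi (0:ℝ),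
          hContent n δ {y | y ∈ B j ∧ ENNReal.ofReal s < g y} ≤ 0 := by
        intro s hs
        have h := hContent_le_div (n := n) (δ := δ) (B j) g hs hp0
        rw [← hIdef, hI0] at h
        simpa using h
      calc choquet n δ (B j) g ≤ ∫⁻ _ in Ioi (0:ℝ), (0:ℝ≥0∞) :=
            lintegral_mono_ae ((ae_restrict_iff' measurableSet_Ioi).2
              (ae_of_all _ fun s hs => hzero s hs))
        _ = 0 := lintegral_zero
    refine le_trans (main1.trans (le_of_eq ?_)) (zero_le)
    simp [hchz]
  by_cases hMt : M = ∞
  · have h1 : M ^ θ = ∞ := by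
      rw [hMt]
      exact ENNReal.top_rpow_of_pos hθpos
    have h2 : I ^ θ₂ ≠ 0 := by
      simp only [Ne, ENNReal.rpow_eq_zero_iff, not_or]
      exact ⟨fun h => hI0 h.1, fun h => absurd h.2 (by linarith)⟩
    have hrhs : (c₁ + c₂) * M ^ θ * I ^ θ₂ = ∞ := by
      rw [h1, ENNReal.mul_top hcne0, ENNReal.top_mul h2]
    rw [hrhs]
    exact le_top
  by_cases hIt : I = ∞
  · have h1 : I ^ θ₂ = ∞ := by
      rw [hIt]
      exact ENNReal.top_rpow_of_pos hθ₂pos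
    have h2 : M ^ θ ≠ 0 := by
      simp only [Ne, ENNReal.rpow_eq_zero_iff, not_or]
      exact ⟨fun h => hM0 h.1, fun h => hMt h.1⟩
    have hrhs : (c₁ + c₂) * M ^ θ * I ^ θ₂ = ∞ := by
      rw [h1, ENNReal.mul_top (mul_ne_zero hcne0 h2)]
    rw [hrhs]
    exact le_top
  -- Main case : 0 < M < ∞ and 0 < I < ∞
  set m := M.toReal with hmdef
  set i := I.toReal with hidef
  have hm : 0 < m := ENNReal.toReal_pos hM0 hMt
  have hi : 0 < i := ENNReal.toReal_pos hI0 hIt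
  have hMr : M = ENNReal.ofReal m := (ENNReal.ofReal_toReal hMt).symm
  have hIr : I = ENNReal.ofReal i := (ENNReal.ofReal_toReal hIt).symm
  have hWofReal : ∀ y : ℝ, ENNReal.ofReal ((2:ℝ) ^ y) = W y := by
    intro y
    rw [hWdef, ← ENNReal.ofReal_rpow_of_pos two_pos]
    norm_num
  have hcjinv : ∀ j : ℤ, ENNReal.ofReal (cj j)⁻¹ = W (-((j:ℝ) * (δ - α))) := by
    intro j
    rw [hcjdef]
    simp only
    rw [← Real.rpow_neg (by norm_num : (0:ℝ) ≤ 2), hWofReal]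
  -- the "near" estimate, coming from the maximal function
  have hnear : ∀ j : ℤ, ENNReal.ofReal (cj j)⁻¹ * choquet n δ (B j) g
      ≤ M * (W (δ - κ) * W ((j:ℝ) * (α - κ))) := by
    intro j
    have hrpos : (0:ℝ) < (2:ℝ) ^ ((j:ℝ) + 1) := Real.rpow_pos_of_pos two_pos _
    have h1 : choquet n δ (B j) g ≤ M * W (((j:ℝ) + 1) * (δ - κ)) := by
      have h := choquet_ball_le hδ0 (κ := κ) f x hrpos hMt
      rwa [← Real.rpow_mul (by norm_num : (0:ℝ) ≤ 2), hWofReal] at h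
    calc ENNReal.ofReal (cj j)⁻¹ * choquet n δ (B j) g
        ≤ W (-((j:ℝ) * (δ - α))) * (M * W (((j:ℝ) + 1) * (δ - κ))) := by
          rw [hcjinv j]
          exact mul_le_mul_right h1 _
      _ = M * (W (-((j:ℝ) * (δ - α)) + ((j:ℝ) + 1) * (δ - κ))) := by
          simp only [hWdef]
          rw [two_rpow_add]
          ring
      _ = M * (W (δ - κ) * W ((j:ℝ) * (α - κ))) := by
          rw [show -((j:ℝ) * (δ - α)) + ((j:ℝ) + 1) * (δ - κ)
            = (δ - κ) + (j:ℝ) * (α - κ) by ring]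
          simp only [hWdef]
          rw [two_rpow_add]
  -- the "far" estimate, coming from the p-energy
  have hfar : ∀ j : ℤ, ENNReal.ofReal (cj j)⁻¹ * choquet n δ (B j) g
      ≤ ((ENNReal.ofReal (p/(p-1)) + 1) * W (δ*(1-1/p)))
        * (I ^ (1/p) * W ((j:ℝ) * (α - δ/p))) := by
    intro j
    rcases eq_or_lt_of_le hp1 with hp1' | hp1'
    · -- the case p = 1
      subst hp1'
      have hfun : (fun y => g y ^ (1:ℝ)) = g := funext fun y => ENNReal.rpow_one (g y)
      have hle1 : choquet n δ (B j) g ≤ I := by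
        rw [hIdef, hfun]
        exact lintegral_mono fun t => hContent_mono fun y hy => ⟨mem_univ y, hy.2⟩
      calc ENNReal.ofReal (cj j)⁻¹ * choquet n δ (B j) g
          ≤ W (-((j:ℝ) * (δ - α))) * I := by
            rw [hcjinv j]
            exact mul_le_mul_right hle1 _
        _ = I ^ (1/(1:ℝ)) * W ((j:ℝ) * (α - δ/1)) := by
            rw [show -((j:ℝ) * (δ - α)) = (j:ℝ) * (α - δ/1) by push_cast; ring]
            rw [show (1/(1:ℝ)) = (1:ℝ) by norm_num, ENNReal.rpow_one]
            exact mul_comm _ _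
        _ ≤ ((ENNReal.ofReal ((1:ℝ)/((1:ℝ)-1)) + 1) * W (δ*(1-1/1)))
            * (I ^ (1/(1:ℝ)) * W ((j:ℝ) * (α - δ/1))) := by
            refine le_mul_of_one_le_left (zero_le) ?_
            have : W (δ*(1-1/1)) = 1 := by
              rw [show δ*(1-1/(1:ℝ)) = 0 by norm_num, hWdef]
              exact ENNReal.rpow_zero
            rw [this, mul_one]
            exact le_add_self
    · -- the case 1 < p
      have hrpos : (0:ℝ) < (2:ℝ) ^ ((j:ℝ) + 1) := Real.rpow_pos_of_pos two_pos _
      have hA0 : (0:ℝ) < ((2:ℝ) ^ ((j:ℝ) + 1)) ^ δ := Real.rpow_pos_of_pos hrpos δ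
      have h4 : ∀ s ∈ Ioi (0:ℝ), hContent n δ {y | y ∈ B j ∧ ENNReal.ofReal s < g y}
          ≤ min (ENNReal.ofReal (((2:ℝ) ^ ((j:ℝ) + 1)) ^ δ))
            (ENNReal.ofReal i * (ENNReal.ofReal (s ^ p))⁻¹) := by
        intro s hs
        refine le_min ?_ ?_
        · exact (hContent_mono (fun y hy => hy.1)).trans (hContent_ball_le hδ0 x hrpos)
        · have h := hContent_le_div (n := n) (δ := δ) (B j) g hs hp0
          rwa [← hIdef, hIr] at h
      have h5 : choquet n δ (B j) g
          ≤ ENNReal.ofReal (p/(p-1) * (i^(1/p) * (((2:ℝ) ^ ((j:ℝ) + 1)) ^ δ)^(1-1/p))) := by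
        refine le_trans ?_ (lintegral_min_kernel hA0 hi hp1')
        exact lintegral_mono_ae ((ae_restrict_iff' measurableSet_Ioi).2 (ae_of_all _ h4))
      have hpp : (0:ℝ) ≤ p/(p-1) := div_nonneg (by linarith) (by linarith)
      have h6 : ENNReal.ofReal (p/(p-1) * (i^(1/p) * (((2:ℝ) ^ ((j:ℝ) + 1)) ^ δ)^(1-1/p)))
          = ENNReal.ofReal (p/(p-1)) * (I ^ (1/p) * W ((((j:ℝ) + 1) * δ) * (1-1/p))) := by
        rw [ENNReal.ofReal_mul hpp, ENNReal.ofReal_mul (Real.rpow_nonneg hi.le _)]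
        congr 1
        congr 1
        · rw [hIr, ENNReal.ofReal_rpow_of_pos hi]
        · rw [← Real.rpow_mul (by norm_num : (0:ℝ) ≤ 2),
            ← Real.rpow_mul (by norm_num : (0:ℝ) ≤ 2), hWofReal]
      calc ENNReal.ofReal (cj j)⁻¹ * choquet n δ (B j) g
          ≤ W (-((j:ℝ) * (δ - α)))
            * (ENNReal.ofReal (p/(p-1)) * (I ^ (1/p) * W ((((j:ℝ) + 1) * δ) * (1-1/p)))) := by
            rw [hcjinv j]
            exact mul_le_mul_right (h5.trans_eq h6) _
        _ = ENNReal.ofReal (p/(p-1))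
            * (I ^ (1/p) * (W (-((j:ℝ) * (δ - α))) * W ((((j:ℝ) + 1) * δ) * (1-1/p)))) := by
            ring
        _ = ENNReal.ofReal (p/(p-1))
            * (I ^ (1/p) * (W (δ*(1-1/p)) * W ((j:ℝ) * (α - δ/p)))) := by
            simp only [hWdef]
            rw [← two_rpow_add, ← two_rpow_add]
            congr 2
            field_simp
            ring
        _ ≤ ((ENNReal.ofReal (p/(p-1)) + 1) * W (δ*(1-1/p)))
            * (I ^ (1/p) * W ((j:ℝ) * (α - δ/p))) := by
            calc ENNReal.ofReal (p/(p-1))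
                * (I ^ (1/p) * (W (δ*(1-1/p)) * W ((j:ℝ) * (α - δ/p))))
                = (ENNReal.ofReal (p/(p-1)) * W (δ*(1-1/p)))
                  * (I ^ (1/p) * W ((j:ℝ) * (α - δ/p))) := by ring
              _ ≤ _ := mul_le_mul_left (mul_le_mul_left le_self_add _) _
  -- choice of the balancing index J
  set Xr : ℝ := (i^(1/p)/m) ^ (p/(δ-κ*p)) with hXrdef
  have hXpos : 0 < Xr := Real.rpow_pos_of_pos (div_pos (Real.rpow_pos_of_pos hi _) hm) _
  set J : ℤ := ⌈Real.logb 2 Xr⌉ with hJdef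
  have h2J_ge : Xr ≤ (2:ℝ) ^ ((J:ℝ)) := by
    calc Xr = 2 ^ Real.logb 2 Xr := (Real.rpow_logb two_pos (by norm_num) hXpos).symm
      _ ≤ 2 ^ ((J:ℝ)) := Real.rpow_le_rpow_of_exponent_le one_le_two (Int.le_ceil _)
  have h2J_le : (2:ℝ) ^ ((J:ℝ)) ≤ 2 * Xr := by
    calc (2:ℝ) ^ ((J:ℝ)) ≤ 2 ^ (Real.logb 2 Xr + 1) :=
          Real.rpow_le_rpow_of_exponent_le one_le_two (Int.ceil_lt_add_one _).le
      _ = 2 * Xr := by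
          rw [Real.rpow_add two_pos, Real.rpow_one,
            Real.rpow_logb two_pos (by norm_num) hXpos]
          ring
  -- summing the two regimes
  have hsum : riesz n δ α f x
      ≤ (W (δ-κ) * (1 - W (κ-α))⁻¹) * (M * W ((J:ℝ) * (α-κ)))
        + (((ENNReal.ofReal (p/(p-1)) + 1) * W (δ*(1-1/p))) * (1 - W (α-δ/p))⁻¹)
          * (I ^ (1/p) * W ((J:ℝ) * (α-δ/p))) := by
    refine main1.trans ?_
    have hterm : ∀ j : ℤ, ENNReal.ofReal (cj j)⁻¹ * choquet n δ (B j) g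
        ≤ (if j ≤ J then M * (W (δ-κ) * W ((j:ℝ) * (α-κ))) else 0)
          + (if j ≤ J then 0 else ((ENNReal.ofReal (p/(p-1)) + 1) * W (δ*(1-1/p)))
              * (I ^ (1/p) * W ((j:ℝ) * (α - δ/p)))) := by
      intro j
      by_cases hj : j ≤ J
      · simpa [hj] using hnear j
      · simpa [hj] using hfar j
    refine (Summable.tsum_le_tsum hterm ENNReal.summable ENNReal.summable).trans ?_
    rw [ENNReal.tsum_add]
    refine add_le_add ?_ ?_
    · have hre : (fun j : ℤ => if j ≤ J then M * (W (δ-κ) * W ((j:ℝ) * (α-κ))) else 0)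
          = fun j : ℤ => (M * W (δ-κ)) * (if j ≤ J then W ((j:ℝ) * (α-κ)) else 0) := by
        funext j
        split
        · ring
        · rw [mul_zero]
      rw [hre, ENNReal.tsum_mul_left]
      have := tsum_int_left J (α-κ)
      simp only [hWdef]
      rw [this]
      rw [show -(α-κ) = κ - α by ring]
      exact le_of_eq (by ring)
    · have hre : (fun j : ℤ => if j ≤ J then 0
          else ((ENNReal.ofReal (p/(p-1)) + 1) * W (δ*(1-1/p)))
            * (I ^ (1/p) * W ((j:ℝ) * (α - δ/p))))
          = fun j : ℤ => (((ENNReal.ofReal (p/(p-1)) + 1) * W (δ*(1-1/p))) * I ^ (1/p))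
            * (if j ≤ J then 0 else W ((j:ℝ) * (α - δ/p))) := by
        funext j
        split
        · rw [mul_zero]
        · ring
      rw [hre, ENNReal.tsum_mul_left]
      simp only [hWdef]
      rw [tsum_int_right J (α - δ/p)]
      have hWle : (2:ℝ≥0∞) ^ (((J:ℝ) + 1) * (α - δ/p)) ≤ (2:ℝ≥0∞) ^ ((J:ℝ) * (α - δ/p)) := by
        refine ENNReal.rpow_le_rpow_of_exponent_le one_le_two ?_
        nlinarith [hαδp]
      calc ((ENNReal.ofReal (p/(p-1)) + 1) * (2:ℝ≥0∞) ^ (δ*(1-1/p)) * (I ^ (1/p)))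
          * ((2:ℝ≥0∞) ^ (((J:ℝ) + 1) * (α - δ/p)) * (1 - (2:ℝ≥0∞) ^ (α - δ/p))⁻¹)
          ≤ ((ENNReal.ofReal (p/(p-1)) + 1) * (2:ℝ≥0∞) ^ (δ*(1-1/p)) * (I ^ (1/p)))
          * ((2:ℝ≥0∞) ^ ((J:ℝ) * (α - δ/p)) * (1 - (2:ℝ≥0∞) ^ (α - δ/p))⁻¹) := by
            exact mul_le_mul_right (mul_le_mul_left hWle _) _
        _ = (((ENNReal.ofReal (p/(p-1)) + 1) * (2:ℝ≥0∞) ^ (δ*(1-1/p)))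
            * (1 - (2:ℝ≥0∞) ^ (α - δ/p))⁻¹)
            * (I ^ (1/p) * (2:ℝ≥0∞) ^ ((J:ℝ) * (α - δ/p))) := by ring
  -- the bridging real identities
  have hu : (0:ℝ) < i^(1/p)/m := div_pos (Real.rpow_pos_of_pos hi _) hm
  have hXe : ∀ e : ℝ, Xr ^ e = i ^ ((1/p) * ((p/(δ-κ*p)) * e)) * (m ^ ((p/(δ-κ*p)) * e))⁻¹ := by
    intro e
    rw [hXrdef, ← Real.rpow_mul hu.le, Real.div_rpow (Real.rpow_nonneg hi.le _) hm.le,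
      ← Real.rpow_mul hi.le, div_eq_mul_inv]
  have hRI1 : m * Xr ^ (α-κ) = m ^ θ * i ^ θ₂ := by
    rw [hXe (α-κ)]
    have hA : (1/p) * ((p/(δ-κ*p)) * (α-κ)) = θ₂ := by
      rw [hθ₂def]
      field_simp
    have hmb : m * (m ^ ((p/(δ-κ*p)) * (α-κ)))⁻¹ = m ^ ((1:ℝ) - (p/(δ-κ*p)) * (α-κ)) := by
      rw [Real.rpow_sub hm, Real.rpow_one]
      exact (div_eq_mul_inv _ _).symm
    have h1B : (1:ℝ) - (p/(δ-κ*p)) * (α-κ) = θ := by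
      rw [hθdef]
      rw [eq_div_iff hden.ne', sub_mul, mul_assoc, mul_comm (α-κ), ← mul_assoc, div_mul_cancel₀ _ hden.ne']
      ring
    calc m * (i ^ ((1/p) * ((p/(δ-κ*p)) * (α-κ)))
          * (m ^ ((p/(δ-κ*p)) * (α-κ)))⁻¹)
        = i ^ ((1/p) * ((p/(δ-κ*p)) * (α-κ)))
          * (m * (m ^ ((p/(δ-κ*p)) * (α-κ)))⁻¹) := by ring
      _ = i ^ θ₂ * m ^ θ := by rw [hmb, hA, h1B]
      _ = m ^ θ * i ^ θ₂ := mul_comm _ _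
  have hRI2 : i^(1/p) * Xr ^ (α-δ/p) = m ^ θ * i ^ θ₂ := by
    rw [hXe (α-δ/p)]
    have hmb : (m ^ ((p/(δ-κ*p)) * (α-δ/p)))⁻¹ = m ^ (-((p/(δ-κ*p)) * (α-δ/p))) := by
      rw [Real.rpow_neg hm.le]
    have hB : -((p/(δ-κ*p)) * (α-δ/p)) = θ := by
      rw [hθdef]
      field_simp
      ring
    have hiA : i^(1/p) * i ^ ((1/p) * ((p/(δ-κ*p)) * (α-δ/p)))
        = i ^ ((1/p) + (1/p) * ((p/(δ-κ*p)) * (α-δ/p))) := (Real.rpow_add hi _ _).symm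
    have hA : (1/p) + (1/p) * ((p/(δ-κ*p)) * (α-δ/p)) = θ₂ := by
      rw [hθ₂def]
      rw [eq_div_iff hden.ne', add_mul, mul_assoc, mul_assoc, mul_comm (α-δ/p), ← mul_assoc (p/(δ-κ*p)), div_mul_cancel₀ _ hden.ne']
      field_simp
      ring
    calc i^(1/p) * (i ^ ((1/p) * ((p/(δ-κ*p)) * (α-δ/p)))
          * (m ^ ((p/(δ-κ*p)) * (α-δ/p)))⁻¹)
        = (i^(1/p) * i ^ ((1/p) * ((p/(δ-κ*p)) * (α-δ/p))))
          * (m ^ ((p/(δ-κ*p)) * (α-δ/p)))⁻¹ := by ring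
      _ = i ^ θ₂ * m ^ θ := by rw [hiA, hA, hmb, hB]
      _ = m ^ θ * i ^ θ₂ := mul_comm _ _
  -- bridging inequalities in ℝ≥0∞
  have hMθ : M ^ θ = ENNReal.ofReal (m ^ θ) := by
    rw [hMr, ENNReal.ofReal_rpow_of_pos hm]
  have hIθ₂ : I ^ θ₂ = ENNReal.ofReal (i ^ θ₂) := by
    rw [hIr, ENNReal.ofReal_rpow_of_pos hi]
  have hI1p : I ^ (1/p) = ENNReal.ofReal (i ^ (1/p)) := by
    rw [hIr, ENNReal.ofReal_rpow_of_pos hi]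
  have hbr1 : M * W ((J:ℝ) * (α-κ)) ≤ W (α-κ) * (M ^ θ * I ^ θ₂) := by
    have e1 : (2:ℝ) ^ ((J:ℝ) * (α-κ)) ≤ 2^(α-κ) * Xr^(α-κ) := by
      calc (2:ℝ) ^ ((J:ℝ) * (α-κ)) = ((2:ℝ) ^ ((J:ℝ))) ^ (α-κ) := by
            rw [← Real.rpow_mul (by norm_num : (0:ℝ) ≤ 2)]
        _ ≤ (2 * Xr) ^ (α-κ) :=
            Real.rpow_le_rpow (Real.rpow_nonneg (by norm_num) _) h2J_le (by linarith)
        _ = 2^(α-κ) * Xr^(α-κ) := Real.mul_rpow (by norm_num) hXpos.le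
    calc M * W ((J:ℝ) * (α-κ))
        = ENNReal.ofReal (m * 2 ^ ((J:ℝ) * (α-κ))) := by
          rw [hMr, ← hWofReal, ← ENNReal.ofReal_mul hm.le]
      _ ≤ ENNReal.ofReal (m * (2^(α-κ) * Xr^(α-κ))) :=
          ENNReal.ofReal_le_ofReal (mul_le_mul_of_nonneg_left e1 hm.le)
      _ = ENNReal.ofReal (2^(α-κ) * (m ^ θ * i ^ θ₂)) := by
          rw [show m * (2^(α-κ) * Xr^(α-κ)) = 2^(α-κ) * (m * Xr^(α-κ)) by ring, hRI1]
      _ = W (α-κ) * (M ^ θ * I ^ θ₂) := by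
          rw [ENNReal.ofReal_mul (Real.rpow_nonneg (by norm_num) _), hWofReal,
            ENNReal.ofReal_mul (Real.rpow_nonneg hm.le _), hMθ, hIθ₂]
  have hbr2 : I ^ (1/p) * W ((J:ℝ) * (α-δ/p)) ≤ M ^ θ * I ^ θ₂ := by
    have e1 : (2:ℝ) ^ ((J:ℝ) * (α-δ/p)) ≤ Xr ^ (α-δ/p) := by
      calc (2:ℝ) ^ ((J:ℝ) * (α-δ/p)) = ((2:ℝ) ^ ((J:ℝ))) ^ (α-δ/p) := by
            rw [← Real.rpow_mul (by norm_num : (0:ℝ) ≤ 2)]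
        _ ≤ Xr ^ (α-δ/p) := Real.rpow_le_rpow_of_nonpos hXpos h2J_ge hαδp.le
    calc I ^ (1/p) * W ((J:ℝ) * (α-δ/p))
        = ENNReal.ofReal (i^(1/p) * 2 ^ ((J:ℝ) * (α-δ/p))) := by
          rw [hI1p, ← hWofReal, ← ENNReal.ofReal_mul (Real.rpow_nonneg hi.le _)]
      _ ≤ ENNReal.ofReal (i^(1/p) * Xr ^ (α-δ/p)) :=
          ENNReal.ofReal_le_ofReal
            (mul_le_mul_of_nonneg_left e1 (Real.rpow_nonneg hi.le _))
      _ = ENNReal.ofReal (m ^ θ * i ^ θ₂) := by rw [hRI2]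
      _ = M ^ θ * I ^ θ₂ := by
          rw [ENNReal.ofReal_mul (Real.rpow_nonneg hm.le _), hMθ, hIθ₂]
  -- final assembly
  calc riesz n δ α f x
      ≤ (W (δ-κ) * (1 - W (κ-α))⁻¹) * (M * W ((J:ℝ) * (α-κ)))
        + (((ENNReal.ofReal (p/(p-1)) + 1) * W (δ*(1-1/p))) * (1 - W (α-δ/p))⁻¹)
          * (I ^ (1/p) * W ((J:ℝ) * (α-δ/p))) := hsum
    _ ≤ (W (δ-κ) * (1 - W (κ-α))⁻¹) * (W (α-κ) * (M ^ θ * I ^ θ₂))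
        + (((ENNReal.ofReal (p/(p-1)) + 1) * W (δ*(1-1/p))) * (1 - W (α-δ/p))⁻¹)
          * (M ^ θ * I ^ θ₂) :=
        add_le_add (mul_le_mul_right hbr1 _) (mul_le_mul_right hbr2 _)
    _ = (c₁ + c₂) * (M ^ θ * I ^ θ₂) := by
        rw [hc₁def, hc₂def]
        ring
    _ = (c₁ + c₂) * M ^ θ * I ^ θ₂ := (mul_assoc _ _ _).symm
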